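/- Let E be a real inner product space and g, d ∈ E with d ≠ 0. If ‖g − d‖ ≤ r for some 0 ≤ r ≤ ‖d‖, then ⟨g, d⟩ ≥ ‖g‖ · (‖d‖² − r²)^{1/2}; that is, the angle between g and d is at most arcsin(r/‖d‖). In particular, if r ≤ ‖d‖/√2 then ⟨g, d⟩ ≥ ‖g‖‖d‖/√2, i.e. the angle between g and d is at most 45°. -/
import Mathlib

open RealInnerProductSpace

/-- If `g` lies in the ball of radius `r ≤ ‖d‖` centered at `d`, then the angle
between `g` and `d` is at most `arcsin (r / ‖d‖)`; in particular it is at most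
45° when `r ≤ ‖d‖ / √2`. -/
theorem fw_rnn_angle_bound
    {E : Type*} [NormedAddCommGroup E] [InnerProductSpace ℝ E]
    (g d : E) (hd : d ≠ 0) (r : ℝ) (hr0 : 0 ≤ r) (hrd : r ≤ ‖d‖)
    (h : ‖g - d‖ ≤ r) :
    ⟪g, d⟫ ≥ ‖g‖ * Real.sqrt (‖d‖ ^ 2 - r ^ 2) ∧
      (r ≤ ‖d‖ / Real.sqrt 2 → ⟪g, d⟫ ≥ ‖g‖ * ‖d‖ / Real.sqrt 2) := by
  have hdpos : (0:ℝ) < ‖d‖ := norm_pos_iff.mpr hd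
  have hsq : ‖g - d‖ ^ 2 = ‖g‖ ^ 2 - 2 * ⟪g, d⟫ + ‖d‖ ^ 2 :=
    norm_sub_sq_real g d
  have h2 : ‖g - d‖ ^ 2 ≤ r ^ 2 := by
    have := norm_nonneg (g - d)
    nlinarith
  have hnn : 0 ≤ ‖d‖ ^ 2 - r ^ 2 := by nlinarith
  set s := Real.sqrt (‖d‖ ^ 2 - r ^ 2) with hs
  have hs2 : s ^ 2 = ‖d‖ ^ 2 - r ^ 2 := Real.sq_sqrt hnn
  have hsnn : 0 ≤ s := Real.sqrt_nonneg _
  have hmain : ⟪g, d⟫ ≥ ‖g‖ * s := by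
    nlinarith [sq_nonneg (‖g‖ - s), norm_nonneg g]
  refine ⟨hmain, fun hr2 => ?_⟩
  have h2pos : (0:ℝ) < Real.sqrt 2 := by positivity
  have hds : ‖d‖ / Real.sqrt 2 ≤ s := by
    rw [hs]
    apply Real.le_sqrt' (by positivity) |>.mpr
    rw [div_pow, Real.sq_sqrt (by norm_num : (2:ℝ) ≥ 0)]
    have : r ^ 2 ≤ (‖d‖ / Real.sqrt 2) ^ 2 := by
      apply pow_le_pow_left₀ hr0 hr2
    rw [div_pow, Real.sq_sqrt (by norm_num : (2:ℝ) ≥ 0)] at this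
    linarith
  calc ⟪g, d⟫ ≥ ‖g‖ * s := hmain
    _ ≥ ‖g‖ * (‖d‖ / Real.sqrt 2) := by
        apply mul_le_mul_of_nonneg_left hds (norm_nonneg g)
    _ = ‖g‖ * ‖d‖ / Real.sqrt 2 := by ring
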